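/- Inner capacity is countably subadditive in the strengthened form: for any set Q⊂ℝⁿ and any universally measurable sets U_j⊂ℝⁿ (j∈ℕ), c_*(⋃_j (Q∩U_j)) ≤ Σ_j c_*(Q∩U_j). -/

import Mathlib

open MeasureTheory ENNReal Filter Topology Set

noncomputable section

/-- Euclidean space ℝⁿ. -/
abbrev Rn (n : ℕ) := EuclideanSpace ℝ (Fin n)

/-- The Riesz kernel κ_α(x,y) = |x-y|^(α-n), valued in ℝ≥0∞. -/
def rieszKernel (n : ℕ) (α : ℝ) (x y : Rn n) : ℝ≥0∞ :=
  ENNReal.ofReal (‖x - y‖ ^ (α - (n : ℝ)))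

/-- The Riesz potential U^μ(x) = ∫ κ_α(x,y) dμ(y). -/
def pot (n : ℕ) (α : ℝ) (μ : Measure (Rn n)) (x : Rn n) : ℝ≥0∞ :=
  ∫⁻ y, rieszKernel n α x y ∂μ

/-- The mutual energy I(μ,ν) = ∬ κ_α d(μ⊗ν). -/
def mEnergy (n : ℕ) (α : ℝ) (μ ν : Measure (Rn n)) : ℝ≥0∞ :=
  ∫⁻ x, pot n α ν x ∂μ

/-- The energy I(μ) of a positive measure. -/
def energy (n : ℕ) (α : ℝ) (μ : Measure (Rn n)) : ℝ≥0∞ := mEnergy n α μ μ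

/-- The inner Riesz capacity c_*(A): the supremum of total masses of positive measures
concentrated on a compact subset of A whose potential is everywhere ≤ 1. -/
def innerCap (n : ℕ) (α : ℝ) (A : Set (Rn n)) : ℝ≥0∞ :=
  ⨆ (μ : Measure (Rn n)) (_ : (∃ K : Set (Rn n), IsCompact K ∧ K ⊆ A ∧ μ Kᶜ = 0) ∧
      ∀ x, pot n α μ x ≤ 1), μ Set.univ

/-- A property holds nearly everywhere on A: the exceptional subset of A has
inner capacity zero. -/
def NearlyOn (n : ℕ) (α : ℝ) (A : Set (Rn n)) (P : Rn n → Prop) : Prop :=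
  innerCap n α {x | x ∈ A ∧ ¬ P x} = 0

/-- E⁺(A): finite-energy positive measures concentrated on A. -/
def EplusOn (n : ℕ) (α : ℝ) (A : Set (Rn n)) : Set (Measure (Rn n)) :=
  {μ | μ Aᶜ = 0 ∧ energy n α μ < ⊤}

/-- The squared energy distance ‖μ - ν‖² = I(μ) + I(ν) - 2 I(μ,ν). -/
def enDist2 (n : ℕ) (α : ℝ) (μ ν : Measure (Rn n)) : ℝ :=
  (energy n α μ).toReal + (energy n α ν).toReal - 2 * (mEnergy n α μ ν).toReal

/-- The energy (strong) distance ‖μ - ν‖. -/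
def enDist (n : ℕ) (α : ℝ) (μ ν : Measure (Rn n)) : ℝ := Real.sqrt (enDist2 n α μ ν)

/-- The Gauss functional I_f(μ) = ‖μ‖² + 2∫ f dμ for the external field f = -U^ω. -/
def gaussF (n : ℕ) (α : ℝ) (ω μ : Measure (Rn n)) : ℝ :=
  (energy n α μ).toReal - 2 * (mEnergy n α μ ω).toReal

/-- The Gauss functional I_f(μ) = ‖μ‖² + 2∫ f dμ for a general external field f. -/
def gaussW (n : ℕ) (α : ℝ) (f : Rn n → ℝ) (μ : Measure (Rn n)) : ℝ :=
  (energy n α μ).toReal + 2 * ∫ y, f y ∂μ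

/-- The cone E⁺(A) is closed in the strong (energy) topology. -/
def StronglyClosed (n : ℕ) (α : ℝ) (A : Set (Rn n)) : Prop :=
  ∀ μ : Measure (Rn n), energy n α μ < ⊤ →
    (∀ ε : ℝ, 0 < ε → ∃ ν ∈ EplusOn n α A, enDist n α μ ν < ε) → μ ∈ EplusOn n α A

/-- E'(A): the strong closure of E⁺(A) within the cone of finite-energy positive measures. -/
def EclosOn (n : ℕ) (α : ℝ) (A : Set (Rn n)) : Set (Measure (Rn n)) :=
  {μ | energy n α μ < ⊤ ∧ ∀ ε : ℝ, 0 < ε → ∃ ν ∈ EplusOn n α A, enDist n α μ ν < ε}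

/-- The outer Riesz capacity c^*(A). -/
def outerCap (n : ℕ) (α : ℝ) (A : Set (Rn n)) : ℝ≥0∞ :=
  ⨅ (O : Set (Rn n)) (_ : IsOpen O ∧ A ⊆ O), innerCap n α O

/-- A is inner α-thin at infinity (Wiener-type criterion). -/
def ThinAtInf (n : ℕ) (α : ℝ) (A : Set (Rn n)) : Prop :=
  ∃ r : ℝ, 1 < r ∧
    ∑' j : ℕ, innerCap n α (A ∩ {x | r ^ j ≤ ‖x‖ ∧ ‖x‖ < r ^ (j + 1)}) /
      ENNReal.ofReal (r ^ ((j : ℝ) * ((n : ℝ) - α))) < ⊤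

/-- ωA is (a measure with the characteristic properties of) the inner balayage of ω onto A:
it is concentrated on A, has finite energy, and its potential equals that of ω
nearly everywhere on A. -/
def IsBalOf (n : ℕ) (α : ℝ) (A : Set (Rn n)) (ω ωA : Measure (Rn n)) : Prop :=
  ωA Aᶜ = 0 ∧ energy n α ωA < ⊤ ∧
    NearlyOn n α A (fun x => pot n α ωA x = pot n α ω x)

/-- strengthened countable subadditivity of inner capacity:
c_*(⋃ⱼ (Q ∩ Uⱼ)) ≤ Σⱼ c_*(Q ∩ Uⱼ) for arbitrary Q and universally measurable Uⱼ. -/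
theorem innerCap_countably_subadditive
    (n : ℕ) (α : ℝ) (hn : 2 ≤ n) (hα0 : 0 < α) (hαn : α < n)
    (Q : Set (Rn n)) (U : ℕ → Set (Rn n))
    (hU : ∀ j, ∀ ρ : Measure (Rn n), NullMeasurableSet (U j) ρ) :
    innerCap n α (⋃ j, Q ∩ U j) ≤ ∑' j, innerCap n α (Q ∩ U j) := by
  refine iSup₂_le fun μ hμ => ?_
  obtain ⟨⟨K, hKcomp, hKsub, hKc⟩, hpot⟩ := hμ
  have hKm : MeasurableSet K := hKcomp.isClosed.measurableSet
  have huniv : μ Set.univ = μ K := by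
    rw [← measure_add_measure_compl hKm, hKc, add_zero]
  rcases K.eq_empty_or_nonempty with rfl | hKne
  · simp [huniv]
  -- `μ` is a finite measure
  obtain ⟨R, hR0, hKR⟩ : ∃ R : ℝ, 0 < R ∧ K ⊆ Metric.closedBall 0 R := by
    obtain ⟨R, hR⟩ := hKcomp.isBounded.subset_closedBall 0
    exact ⟨max R 1, by positivity,
      hR.trans (Metric.closedBall_subset_closedBall (le_max_left _ _))⟩
  haveI : Nonempty (Fin n) := ⟨⟨0, by omega⟩⟩
  obtain ⟨x, hx⟩ : ∃ x : Rn n, ‖x‖ = 2 * R + 1 := exists_norm_eq _ (by positivity)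
  set c : ℝ≥0∞ := ENNReal.ofReal ((3 * R + 1) ^ (α - (n : ℝ))) with hc
  have hcpos : 0 < c := ENNReal.ofReal_pos.mpr (Real.rpow_pos_of_pos (by positivity) _)
  have hker : ∀ y ∈ K, c ≤ rieszKernel n α x y := by
    intro y hy
    have hy' : ‖y‖ ≤ R := by simpa using hKR hy
    have h1 : ‖x - y‖ ≤ 3 * R + 1 := by
      calc ‖x - y‖ ≤ ‖x‖ + ‖y‖ := norm_sub_le _ _
        _ ≤ 3 * R + 1 := by rw [hx]; linarith
    have h2 : (0 : ℝ) < ‖x - y‖ := by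
      have := norm_sub_norm_le x y
      rw [hx] at this; linarith
    exact ENNReal.ofReal_le_ofReal
      (Real.rpow_le_rpow_of_nonpos h2 h1 (by push_cast; linarith))
  have hfin : μ K ≠ ⊤ := by
    intro htop
    have hle : c * μ K ≤ pot n α μ x := by
      calc c * μ K = ∫⁻ _ in K, c ∂μ := (setLIntegral_const K c).symm
        _ ≤ ∫⁻ y in K, rieszKernel n α x y ∂μ := setLIntegral_mono' hKm hker
        _ ≤ ∫⁻ y, rieszKernel n α x y ∂μ := setLIntegral_le_lintegral _ _
    rw [htop, ENNReal.mul_top hcpos.ne'] at hle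
    exact absurd (hle.trans (hpot x)) (by simp)
  haveI : IsFiniteMeasure μ := ⟨by rw [huniv]; exact lt_top_iff_ne_top.mpr hfin⟩
  -- disjointify
  set V : ℕ → Set (Rn n) := disjointed U with hV
  have hVnm : ∀ j, NullMeasurableSet (V j) μ :=
    NullMeasurableSet.disjointed (fun i => hU i μ)
  have hVsub : ∀ j, V j ⊆ U j := fun j => disjointed_subset U j
  have hVdisj : Pairwise (Function.onFun Disjoint V) := disjoint_disjointed U
  have hKQ : K ⊆ Q := hKsub.trans (by simp [Set.iUnion_subset_iff])
  have hKV : K = ⋃ j, K ∩ V j := by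
    rw [← Set.inter_iUnion, hV, iUnion_disjointed]
    exact (Set.inter_eq_left.mpr
      (hKsub.trans (Set.iUnion_mono fun j => Set.inter_subset_right))).symm
  have hsum : μ K = ∑' j, μ (K ∩ V j) := by
    conv_lhs => rw [hKV]
    exact measure_iUnion₀
      (hVdisj.mono fun i j h =>
        ((h.mono Set.inter_subset_right Set.inter_subset_right).aedisjoint))
      (fun j => hKm.nullMeasurableSet.inter (hVnm j))
  -- main estimate
  refine ENNReal.le_of_forall_pos_le_add fun ε hε hS => ?_
  set δ : ℝ≥0∞ := (ε : ℝ≥0∞) / 2 with hδ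
  have hδ0 : δ ≠ 0 := by
    simp only [hδ, ne_eq, ENNReal.div_eq_zero_iff, ENNReal.coe_eq_zero, ENNReal.ofNat_ne_top,
      or_false]
    exact hε.ne'
  have key : ∀ j, μ (K ∩ V j) ≤ innerCap n α (Q ∩ U j) + δ * 2⁻¹ ^ j := by
    intro j
    obtain ⟨t, hts, htm, hteq⟩ := (hVnm j).exists_measurable_subset_ae_eq
    have hμeq : μ (K ∩ V j) = μ (K ∩ t) :=
      measure_congr (ae_eq_set_inter (ae_eq_refl K) hteq.symm)
    have hδj : δ * 2⁻¹ ^ j ≠ 0 := by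
      apply mul_ne_zero hδ0
      simp [pow_ne_zero_iff, ENNReal.inv_ne_zero]
    obtain ⟨F, hFsub, hFcomp, hFlt⟩ :=
      (hKm.inter htm).exists_isCompact_lt_add (measure_ne_top μ _) hδj
    have hFQ : F ⊆ Q ∩ U j := fun y hy =>
      ⟨hKQ (hFsub hy).1, hVsub j (hts (hFsub hy).2)⟩
    have hcap : μ F ≤ innerCap n α (Q ∩ U j) := by
      refine le_iSup₂_of_le (μ.restrict F) ⟨⟨F, hFcomp, hFQ, ?_⟩, fun z => ?_⟩ ?_
      · rw [Measure.restrict_apply (hFcomp.isClosed.measurableSet.compl)]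
        simp
      · refine le_trans ?_ (hpot z)
        exact lintegral_mono' Measure.restrict_le_self le_rfl
      · rw [Measure.restrict_apply_univ]
    calc μ (K ∩ V j) = μ (K ∩ t) := hμeq
      _ ≤ μ F + δ * 2⁻¹ ^ j := hFlt.le
      _ ≤ innerCap n α (Q ∩ U j) + δ * 2⁻¹ ^ j := by gcongr
  have hgeom : ∑' j : ℕ, δ * 2⁻¹ ^ j = δ * 2 := by
    rw [ENNReal.tsum_mul_left, ENNReal.tsum_geometric, ENNReal.one_sub_inv_two, inv_inv]
  calc μ Set.univ = μ K := huniv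
    _ = ∑' j, μ (K ∩ V j) := hsum
    _ ≤ ∑' j, (innerCap n α (Q ∩ U j) + δ * 2⁻¹ ^ j) := ENNReal.tsum_le_tsum key
    _ = (∑' j, innerCap n α (Q ∩ U j)) + ∑' j : ℕ, δ * 2⁻¹ ^ j := ENNReal.tsum_add
    _ = (∑' j, innerCap n α (Q ∩ U j)) + ε := by
        rw [hgeom, hδ, ENNReal.div_mul_cancel (by norm_num) (by norm_num)]
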